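/- Let x, y be complex numbers with Re x < 0 and 0 < Re y < 1. Then −x Σ_{m≥0} ( (−y/2)ₘ ((1−x−y)/2)ₘ / (m! ((1−x)/2)ₘ) ) · Γ(2m−x) Γ(1−y) / Γ(2m+1−x−y) = ( Γ(1−x) Γ(1−y) / Γ(1−x−y) ) · Σ_{m≥0} ( (−y/2)ₘ (−x/2)ₘ / (m! (1−(x+y)/2)ₘ) ), and this common value equals ( Γ(1−x) Γ(1−y) / Γ(1−x−y) ) · ( Γ(1−(x+y)/2) / ( Γ(1−x/2) Γ(1−y/2) ) ). -/

import Mathlib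

open Complex Filter Metric Finset

attribute [local instance] Classical.propDecidable

noncomputable section

/-- Condition on the summation variables of the level-two multiple polylogarithm:
`m` is strictly increasing, `m i ≡ i+1 (mod 2)` (so `m 0` is odd, `m 1` even, ...),
and all `m i` are positive. -/
def athCond (n : ℕ) (m : Fin n → ℕ) : Prop :=
  StrictMono m ∧ ∀ i : Fin n, m i % 2 = ((i : ℕ) + 1) % 2 ∧ 0 < m i

/-- The last entry `m n` of the summation sequence (junk value `0` for depth `0`). -/
def lastExp {n : ℕ} (m : Fin n → ℕ) : ℕ :=
  if h : 0 < n then m ⟨n - 1, Nat.sub_lt h Nat.one_pos⟩ else 0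

/-- The level-two multiple polylogarithm
`Ath(𝐤; t) = Σ_{0<m₁<⋯<mₙ, mᵢ ≡ i (2)} t^{mₙ}/(m₁^{k₁}⋯mₙ^{kₙ})`, with `Ath(∅;t) = 1`. -/
def Ath {n : ℕ} (k : Fin n → ℕ) (t : ℂ) : ℂ :=
  ∑' m : Fin n → ℕ,
    if athCond n m then t ^ lastExp m / ∏ i, ((m i : ℂ) ^ k i) else 0

/-- The multiple T-value `T(𝐤) = 2^n Σ_{0<m₁<⋯<mₙ, mᵢ ≡ i (2)} 1/(m₁^{k₁}⋯mₙ^{kₙ})`. -/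
def Tval {n : ℕ} (k : Fin n → ℕ) : ℝ :=
  2 ^ n * ∑' m : Fin n → ℕ,
    if athCond n m then (∏ i, ((m i : ℝ) ^ k i))⁻¹ else 0

/-- `κ` is an index of weight `k`, depth `n` and height `s`. -/
def IdxCond (k n s : ℕ) (κ : Fin n → ℕ) : Prop :=
  (∀ i, 1 ≤ κ i) ∧ (∑ i, κ i) = k ∧ (Finset.univ.filter fun i => 2 ≤ κ i).card = s

/-- `κ` is an admissible index of weight `k`, depth `n` and height `s`. -/
def IdxCond0 (k n s : ℕ) (κ : Fin n → ℕ) : Prop :=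
  IdxCond k n s κ ∧ ∀ h : 0 < n, 2 ≤ κ ⟨n - 1, Nat.sub_lt h Nat.one_pos⟩

/-- `G(k,n,s;t) = 2^n Σ_{𝐤 ∈ I(k,n,s)} Ath(𝐤;t)`. -/
def G (k n s : ℕ) (t : ℂ) : ℂ :=
  2 ^ n * ∑' κ : Fin n → ℕ, if IdxCond k n s κ then Ath κ t else 0

/-- `G₀(k,n,s;t) = 2^n Σ_{𝐤 ∈ I₀(k,n,s)} Ath(𝐤;t)`. -/
def G0 (k n s : ℕ) (t : ℂ) : ℂ :=
  2 ^ n * ∑' κ : Fin n → ℕ, if IdxCond0 k n s κ then Ath κ t else 0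

/-- `Σ_{𝐤 ∈ I₀(k,n,s)} T(𝐤)`. -/
def sumT0 (k n s : ℕ) : ℝ :=
  ∑' κ : Fin n → ℕ, if IdxCond0 k n s κ then Tval κ else 0

/-- One term of the generating function `Φ`. -/
def PhiTerm (x y z : ℂ) (p : ℕ × ℕ × ℕ) (t : ℂ) : ℂ :=
  if 1 ≤ p.1 ∧ 1 ≤ p.2.1 then
    G p.1 p.2.1 p.2.2 t * x ^ (p.1 - p.2.1 - p.2.2) * y ^ (p.2.1 - p.2.2) * z ^ (2 * p.2.2)
  else 0

/-- `Φ(x,y,z;t) = 1 + Σ_{k,n≥1, s≥0} G(k,n,s;t) x^{k−n−s} y^{n−s} z^{2s}`. -/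
def Phi (x y z t : ℂ) : ℂ := 1 + ∑' p : ℕ × ℕ × ℕ, PhiTerm x y z p t

/-- One term of the generating function `Φ₀`. -/
def Phi0Term (x y z : ℂ) (p : ℕ × ℕ × ℕ) (t : ℂ) : ℂ :=
  if 1 ≤ p.1 ∧ 1 ≤ p.2.1 ∧ 1 ≤ p.2.2 then
    G0 p.1 p.2.1 p.2.2 t * x ^ (p.1 - p.2.1 - p.2.2) * y ^ (p.2.1 - p.2.2)
      * z ^ (2 * (p.2.2 - 1))
  else 0

/-- `Φ₀(x,y,z;t) = Σ_{k,n,s≥1} G₀(k,n,s;t) x^{k−n−s} y^{n−s} z^{2(s−1)}`. -/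
def Phi0 (x y z t : ℂ) : ℂ := ∑' p : ℕ × ℕ × ℕ, Phi0Term x y z p t

/-- The shifted factorial `(a)ₙ = a(a+1)⋯(a+n−1)`. -/
def poch (a : ℂ) (n : ℕ) : ℂ := ∏ j ∈ Finset.range n, (a + j)

/-- The Gauss hypergeometric series `F(a,b,c;t)`. -/
def hypF (a b c t : ℂ) : ℂ :=
  ∑' n : ℕ, poch a n * poch b n / ((n.factorial : ℂ) * poch c n) * t ^ n
lemma poch_zero (a : ℂ) : poch a 0 = 1 := by simp [poch]

lemma poch_succ (a : ℂ) (n : ℕ) : poch a (n+1) = poch a n * (a + n) :=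
  Finset.prod_range_succ _ _

lemma poch_succ' (a : ℂ) (n : ℕ) : poch a (n+1) = a * poch (a+1) n := by
  rw [poch, Finset.prod_range_succ', poch]
  have h : ∀ j ∈ Finset.range n, a + ((j+1:ℕ):ℂ) = (a+1) + j := fun j _ => by push_cast; ring
  rw [Finset.prod_congr rfl h]
  push_cast
  ring

lemma poch_ne_zero {a : ℂ} (ha : 0 < a.re) (n : ℕ) : poch a n ≠ 0 := by
  refine Finset.prod_ne_zero_iff.mpr fun j _ h => ?_
  have : (a + j).re = a.re + j := by simp
  rw [h] at this
  simp at this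
  have : (0:ℝ) ≤ (j:ℝ) := by positivity
  linarith

lemma Gamma_poch {z : ℂ} (hz : 0 < z.re) (n : ℕ) :
    Complex.Gamma (z + n) = poch z n * Complex.Gamma z := by
  induction n with
  | zero => simp [poch]
  | succ n ih =>
    have hzn : z + n ≠ 0 := by
      intro h
      have : (z + n).re = z.re + n := by simp
      rw [h] at this; simp at this
      have : (0:ℝ) ≤ (n:ℝ) := by positivity
      linarith
    have h1 : z + ((n:ℕ)+1:ℕ) = (z + n) + 1 := by push_cast; ring
    rw [h1, Complex.Gamma_add_one _ hzn, ih, poch_succ]; ring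

lemma poch_two_mul (a : ℂ) (n : ℕ) :
    poch a (2*n) = 4^n * poch (a/2) n * poch ((a+1)/2) n := by
  induction n with
  | zero => simp [poch]
  | succ n ih =>
    have h1 : 2*(n+1) = (2*n+1)+1 := by ring
    rw [h1, poch_succ, poch_succ, ih, poch_succ, poch_succ]
    push_cast
    ring

lemma poch_one_eq (n : ℕ) : poch 1 n = (n.factorial : ℂ) := by
  have h : ∀ j ∈ Finset.range n, (1:ℂ) + j = ((j+1 : ℕ) : ℂ) := fun j _ => by push_cast; ring
  rw [poch, Finset.prod_congr rfl h, ← Nat.cast_prod]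
  norm_cast
  exact Finset.prod_range_add_one_eq_factorial n

lemma add_nat_ne_zero {z : ℂ} (hz : 0 < z.re) (n : ℕ) : z + n ≠ 0 := by
  intro h
  have h1 : (z + n).re = z.re + n := by simp
  rw [h] at h1; simp at h1
  have : (0:ℝ) ≤ (n:ℝ) := by positivity
  linarith

lemma sum_gauss (a b : ℂ) (hc : 0 < (a+b+1).re) (N : ℕ) :
    ∑ m ∈ Finset.range (N+1), poch a m * poch b m / ((m.factorial : ℂ) * poch (a+b+1) m)
      = poch (a+1) N * poch (b+1) N / ((N.factorial : ℂ) * poch (a+b+1) N) := by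
  induction N with
  | zero => simp [poch]
  | succ N ih =>
    rw [Finset.sum_range_succ, ih]
    have hC : poch (a+b+1) N ≠ 0 := poch_ne_zero hc N
    have hcN : (a+b+1) + N ≠ 0 := add_nat_ne_zero hc N
    have hF : ((N.factorial:ℕ):ℂ) ≠ 0 := Nat.cast_ne_zero.mpr N.factorial_ne_zero
    rw [poch_succ' a N, poch_succ' b N, poch_succ (a+b+1) N, poch_succ (a+1) N,
      poch_succ (b+1) N, Nat.factorial_succ]
    push_cast
    have hN1 : ((N:ℂ)+1) ≠ 0 := by
      intro h; have := congrArg Complex.re h; simp at this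
      have : (0:ℝ) ≤ (N:ℝ) := by positivity
      linarith
    field_simp
    ring

lemma tendsto_ratio (u v : ℂ) : Tendsto (fun N : ℕ => (u + N)/(v + N)) atTop (nhds 1) := by
  have hnorm : Tendsto (fun N : ℕ => ‖v + N‖) atTop atTop := by
    apply tendsto_atTop_mono' _ _ (tendsto_atTop_add_const_right atTop (-‖v‖)
      tendsto_natCast_atTop_atTop)
    filter_upwards [] with N
    have h1 := norm_sub_norm_le ((N:ℂ)) (-v)
    simp only [norm_neg, sub_neg_eq_add] at h1
    have h2 : ‖(N:ℂ)‖ = (N:ℝ) := by simp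
    rw [h2] at h1
    have h3 : ‖(N:ℂ) + v‖ = ‖v + (N:ℂ)‖ := by rw [add_comm]
    linarith
  have hinv : Tendsto (fun N : ℕ => ((v + N):ℂ)⁻¹) atTop (nhds 0) := by
    rw [tendsto_zero_iff_norm_tendsto_zero]
    simpa [Pi.inv_def] using hnorm.inv_tendsto_atTop
  have h2 : Tendsto (fun N : ℕ => 1 + (u - v) * ((v + N):ℂ)⁻¹) atTop (nhds 1) := by
    have h3 := hinv.const_mul (u - v)
    have := (tendsto_const_nhds (x := (1:ℂ)) (f := atTop)).add h3
    simpa using this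
  apply Tendsto.congr' _ h2
  filter_upwards [hnorm.eventually_gt_atTop 0] with N hN
  have hvN : (v + N : ℂ) ≠ 0 := by intro h; rw [h] at hN; simp at hN
  field_simp
  ring

set_option maxHeartbeats 2000000 in
lemma tendsto_gauss_partial (a b : ℂ) (ha : 0 < (a+1).re) (hb : 0 < (b+1).re)
    (hc : 0 < (a+b+1).re) :
    Tendsto (fun N : ℕ => poch (a+1) N * poch (b+1) N / ((N.factorial:ℂ) * poch (a+b+1) N))
      atTop
      (nhds (Complex.Gamma (a+b+1) / (Complex.Gamma (a+1) * Complex.Gamma (b+1)))) := by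
  have key : ∀ N : ℕ, 1 ≤ N →
      poch (a+1) N * poch (b+1) N / ((N.factorial:ℂ) * poch (a+b+1) N)
      = (Complex.GammaSeq 1 N * Complex.GammaSeq (a+b+1) N)
          / (Complex.GammaSeq (a+1) N * Complex.GammaSeq (b+1) N)
        * (((1:ℂ) + N)/((a+1) + N) * (((a+b+1) + N)/((b+1) + N))) := by
    intro N hN
    have hN0 : (N:ℂ) ≠ 0 := Nat.cast_ne_zero.mpr (Nat.one_le_iff_ne_zero.mp hN)
    have e : ∀ s : ℂ, Complex.GammaSeq s N
        = (N:ℂ)^s * (N.factorial:ℂ) / (poch s N * (s + N)) := fun s => by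
      rw [Complex.GammaSeq, ← poch_succ]
      rfl
    have hca : (N:ℂ)^((a+b+1):ℂ) = (N:ℂ)^(a+1) * (N:ℂ)^(b+1) / (N:ℂ)^(1:ℂ) := by
      have h1 : (N:ℂ)^(1:ℂ) ≠ 0 := by
        simp [Complex.cpow_eq_zero_iff, hN0]
      rw [eq_div_iff h1, ← Complex.cpow_add _ _ hN0, ← Complex.cpow_add _ _ hN0]
      ring_nf
    rw [e, e, e, e, poch_one_eq]
    have hPa := poch_ne_zero ha N
    have hPb := poch_ne_zero hb N
    have hPc := poch_ne_zero hc N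
    have hF : (N.factorial:ℂ) ≠ 0 := Nat.cast_ne_zero.mpr N.factorial_ne_zero
    have h1N : (1:ℂ) + N ≠ 0 := add_nat_ne_zero (by norm_num) N
    have haN : (a+1) + N ≠ 0 := add_nat_ne_zero ha N
    have hbN : (b+1) + N ≠ 0 := add_nat_ne_zero hb N
    have hcN : (a+b+1) + N ≠ 0 := add_nat_ne_zero hc N
    have hXa : (N:ℂ)^(a+1) ≠ 0 := by simp [Complex.cpow_eq_zero_iff, hN0]
    have hXb : (N:ℂ)^(b+1) ≠ 0 := by simp [Complex.cpow_eq_zero_iff, hN0]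
    have hX1 : (N:ℂ)^(1:ℂ) ≠ 0 := by simp [Complex.cpow_eq_zero_iff, hN0]
    set F := (N.factorial:ℂ) with hsF
    set X1 := (N:ℂ)^(1:ℂ) with hsX1
    set Xa := (N:ℂ)^(a+1) with hsXa
    set Xb := (N:ℂ)^(b+1) with hsXb
    set Xc := (N:ℂ)^((a+b+1):ℂ) with hsXc
    set Pa := poch (a+1) N with hsPa
    set Pb := poch (b+1) N with hsPb
    set Pc := poch (a+b+1) N with hsPc
    set u1 := (1:ℂ) + N with hsu1
    set ua := (a+1) + (N:ℂ) with hsua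
    set ub := (b+1) + (N:ℂ) with hsub
    set uc := (a+b+1) + (N:ℂ) with hsuc
    have hca' : X1 * Xc = Xa * Xb := by
      rw [hca]; field_simp
    clear_value F X1 Xa Xb Xc Pa Pb Pc u1 ua ub uc
    clear hca hsF hsX1 hsXa hsXb hsXc hsPa hsPb hsPc hsu1 hsua hsub hsuc e hN hN0
    rw [div_mul_div_comm, div_mul_div_comm, div_div_div_comm, div_mul_div_comm]
    have hAB : X1 * F * (Xc * F) / (Xa * F * (Xb * F)) = 1 := by
      rw [div_eq_one_iff_eq (mul_ne_zero (mul_ne_zero hXa hF) (mul_ne_zero hXb hF))]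
      linear_combination F^2 * hca'
    rw [hAB, one_div, inv_div]
    field_simp
  have T1 := ((Complex.GammaSeq_tendsto_Gamma 1).mul
      (Complex.GammaSeq_tendsto_Gamma (a+b+1))).div
    ((Complex.GammaSeq_tendsto_Gamma (a+1)).mul (Complex.GammaSeq_tendsto_Gamma (b+1)))
    (mul_ne_zero (Complex.Gamma_ne_zero_of_re_pos ha) (Complex.Gamma_ne_zero_of_re_pos hb))
  have T2 := (tendsto_ratio 1 (a+1)).mul (tendsto_ratio (a+b+1) (b+1))
  have T := T1.mul T2
  have hval : (Complex.Gamma 1 * Complex.Gamma (a+b+1))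
      / (Complex.Gamma (a+1) * Complex.Gamma (b+1)) * (1 * 1)
      = Complex.Gamma (a+b+1) / (Complex.Gamma (a+1) * Complex.Gamma (b+1)) := by
    rw [Complex.Gamma_one]; ring
  rw [hval] at T
  exact Tendsto.congr'
    (by filter_upwards [eventually_ge_atTop 1] with N hN; exact (key N hN).symm) T

lemma gauss_tsum (a b : ℂ) (ha : 0 < (a+1).re) (hb : 0 < (b+1).re)
    (hc : 1/2 ≤ (a+b+1).re) :
    ∑' m : ℕ, poch a m * poch b m / ((m.factorial:ℂ) * poch (a+b+1) m)
      = Complex.Gamma (a+b+1) / (Complex.Gamma (a+1) * Complex.Gamma (b+1)) := by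
  have hc0 : 0 < (a+b+1).re := lt_of_lt_of_le (by norm_num) hc
  set t : ℕ → ℂ := fun m => poch a m * poch b m / ((m.factorial:ℂ) * poch (a+b+1) m)
    with htdef
  set P : ℕ → ℂ := fun N => poch (a+1) N * poch (b+1) N
    / ((N.factorial:ℂ) * poch (a+b+1) N) with hPdef
  have hTP : Tendsto P atTop
      (nhds (Complex.Gamma (a+b+1) / (Complex.Gamma (a+1) * Complex.Gamma (b+1)))) :=
    tendsto_gauss_partial a b ha hb hc0
  have hstep : ∀ m : ℕ, t (m+1) = P m * (a*b) / ((((m:ℕ):ℂ)+1)*((a+b+1)+m)) := by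
    intro m
    have hC : poch (a+b+1) m ≠ 0 := poch_ne_zero hc0 m
    have hcN : (a+b+1) + m ≠ 0 := add_nat_ne_zero hc0 m
    have hF : ((m.factorial:ℕ):ℂ) ≠ 0 := Nat.cast_ne_zero.mpr m.factorial_ne_zero
    have hm1 : ((m:ℕ):ℂ)+1 ≠ 0 := by
      intro h; have := congrArg Complex.re h; simp at this
      have : (0:ℝ) ≤ (m:ℝ) := by positivity
      linarith
    simp only [htdef, hPdef, poch_succ' a, poch_succ' b, poch_succ (a+b+1),
      Nat.factorial_succ]
    push_cast
    field_simp
  -- bound on P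
  obtain ⟨C, hC⟩ : ∃ C : ℝ, ∀ N, ‖P N‖ ≤ C := by
    obtain ⟨C, hC⟩ := hTP.norm.bddAbove_range
    exact ⟨C, fun N => hC (Set.mem_range_self N)⟩
  have hC0 : 0 ≤ C := le_trans (norm_nonneg _) (hC 0)
  have hsum : Summable t := by
    rw [← summable_nat_add_iff 1]
    apply Summable.of_norm_bounded (g := fun m : ℕ => (C*‖a*b‖*2) * (1/((m:ℝ)+1)^2))
    · apply Summable.mul_left
      have := Real.summable_one_div_nat_pow.mpr (one_lt_two)
      exact_mod_cast (summable_nat_add_iff 1).mpr this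
    · intro m
      rw [hstep m]
      have hnorm1 : ‖(((m:ℕ):ℂ)+1)‖ = (m:ℝ)+1 := by
        rw [show (((m:ℕ):ℂ)+1) = (((m+1:ℕ):ℕ):ℂ) by push_cast; ring]
        rw [Complex.norm_natCast]
        push_cast; ring
      have hnorm2 : ((m:ℝ)+1)/2 ≤ ‖(a+b+1) + (m:ℂ)‖ := by
        have h1 : ((a+b+1) + (m:ℂ)).re ≤ ‖(a+b+1) + (m:ℂ)‖ := Complex.re_le_norm _
        have h2 : ((a+b+1) + (m:ℂ)).re = (a+b+1).re + m := by simp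
        rw [h2] at h1
        linarith
      rw [norm_div, norm_mul, norm_mul ((((m:ℕ):ℂ))+1), hnorm1]
      have hm1 : (0:ℝ) < (m:ℝ)+1 := by positivity
      calc ‖P m‖ * ‖a*b‖ / (((m:ℝ)+1) * ‖(a+b+1) + (m:ℂ)‖)
          ≤ C * ‖a*b‖ / (((m:ℝ)+1) * (((m:ℝ)+1)/2)) := by
            apply div_le_div₀ (by positivity)
              (mul_le_mul_of_nonneg_right (hC m) (norm_nonneg _)) (by positivity)
            exact mul_le_mul_of_nonneg_left hnorm2 (le_of_lt hm1)
        _ = (C*‖a*b‖*2) * (1/((m:ℝ)+1)^2) := by field_simp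
  have h2 := hsum.hasSum.tendsto_sum_nat.comp (tendsto_add_atTop_nat 1)
  have h3 : Tendsto P atTop (nhds (∑' m, t m)) := by
    apply Tendsto.congr _ h2
    intro N
    exact sum_gauss a b hc0 N
  exact tendsto_nhds_unique h3 hTP

lemma re_div_two (z : ℂ) : (z/2).re = z.re/2 := by
  rw [div_eq_mul_inv]
  have h : ((2:ℂ))⁻¹ = ((2⁻¹:ℝ):ℂ) := by norm_num
  rw [h, Complex.mul_re]
  simp; ring

/-- The Gamma-function evaluation of the limit series, via the Gauss summation formula. -/
theorem gamma_series_evaluation (x y : ℂ) (hrex : x.re < 0)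
    (hrey0 : 0 < y.re) (hrey1 : y.re < 1) :
    (-x * ∑' m : ℕ,
        (poch (-y / 2) m * poch ((1 - x - y) / 2) m
            / ((m.factorial : ℂ) * poch ((1 - x) / 2) m))
          * (Complex.Gamma (2 * (m : ℂ) - x) * Complex.Gamma (1 - y)
              / Complex.Gamma (2 * (m : ℂ) + 1 - x - y))
      = Complex.Gamma (1 - x) * Complex.Gamma (1 - y) / Complex.Gamma (1 - x - y)
          * ∑' m : ℕ, poch (-y / 2) m * poch (-x / 2) m
              / ((m.factorial : ℂ) * poch (1 - (x + y) / 2) m)) ∧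
    -x * ∑' m : ℕ,
        (poch (-y / 2) m * poch ((1 - x - y) / 2) m
            / ((m.factorial : ℂ) * poch ((1 - x) / 2) m))
          * (Complex.Gamma (2 * (m : ℂ) - x) * Complex.Gamma (1 - y)
              / Complex.Gamma (2 * (m : ℂ) + 1 - x - y))
      = Complex.Gamma (1 - x) * Complex.Gamma (1 - y) / Complex.Gamma (1 - x - y)
          * (Complex.Gamma (1 - (x + y) / 2)
              / (Complex.Gamma (1 - x / 2) * Complex.Gamma (1 - y / 2))) := by
  have hx0 : 0 < (-x).re := by simp [Complex.neg_re]; linarith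
  have hxne : -x ≠ 0 := by
    intro h; rw [h] at hx0; simp at hx0
  have h1y : 0 < (1-y).re := by simp [Complex.sub_re, Complex.one_re]; linarith
  have h1xy : 0 < (1-x-y).re := by
    simp [Complex.sub_re, Complex.one_re]; linarith
  have key : ∀ m : ℕ, (poch (-y / 2) m * poch ((1 - x - y) / 2) m
            / ((m.factorial : ℂ) * poch ((1 - x) / 2) m))
          * (Complex.Gamma (2 * (m : ℂ) - x) * Complex.Gamma (1 - y)
              / Complex.Gamma (2 * (m : ℂ) + 1 - x - y))
      = (Complex.Gamma (-x) * Complex.Gamma (1 - y) / Complex.Gamma (1 - x - y))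
          * (poch (-y / 2) m * poch (-x / 2) m
              / ((m.factorial : ℂ) * poch (1 - (x + y) / 2) m)) := by
    intro m
    have e1 : 2 * (m : ℂ) - x = -x + ((2*m : ℕ) : ℂ) := by push_cast; ring
    have e2 : 2 * (m : ℂ) + 1 - x - y = (1 - x - y) + ((2*m : ℕ) : ℂ) := by
      push_cast; ring
    rw [e1, e2, Gamma_poch hx0, Gamma_poch h1xy, poch_two_mul, poch_two_mul]
    rw [show ((-x)+1)/2 = (1-x)/2 by ring, show ((1-x-y)+1)/2 = 1-(x+y)/2 by ring]
    have h4 : ((4:ℂ))^m ≠ 0 := by norm_num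
    have hF : ((m.factorial:ℕ):ℂ) ≠ 0 := Nat.cast_ne_zero.mpr m.factorial_ne_zero
    have hP1 : poch ((1-x)/2) m ≠ 0 := by
      apply poch_ne_zero _ m
      rw [re_div_two]
      simp [Complex.sub_re, Complex.one_re]; linarith
    have hP2 : poch ((1-x-y)/2) m ≠ 0 := by
      apply poch_ne_zero _ m
      rw [re_div_two]; linarith
    have hP3 : poch (1-(x+y)/2) m ≠ 0 := by
      apply poch_ne_zero _ m
      simp only [Complex.sub_re, Complex.one_re, re_div_two, Complex.add_re]
      linarith
    have hG : Complex.Gamma (1-x-y) ≠ 0 := Complex.Gamma_ne_zero_of_re_pos h1xy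
    set A := poch (-y/2) m with hsA
    set B := poch ((1-x-y)/2) m with hsB
    set D := poch ((1-x)/2) m with hsD
    set E := poch (-x/2) m with hsE
    set Cc := poch (1-(x+y)/2) m with hsC
    set F4 := ((4:ℂ))^m with hsF4
    set Fm := ((m.factorial:ℕ):ℂ) with hsFm
    set G1 := Complex.Gamma (-x) with hsG1
    set G2 := Complex.Gamma (1-y) with hsG2
    set G3 := Complex.Gamma (1-x-y) with hsG3
    clear_value A B D E Cc F4 Fm G1 G2 G3
    clear hsA hsB hsD hsE hsC hsF4 hsFm hsG1 hsG2 hsG3 e1 e2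
    rw [div_mul_div_comm, div_mul_div_comm, div_eq_div_iff
      (by apply_rules [mul_ne_zero]) (by apply_rules [mul_ne_zero])]
    ring
  have hsum1 : (∑' m : ℕ, (poch (-y / 2) m * poch ((1 - x - y) / 2) m
            / ((m.factorial : ℂ) * poch ((1 - x) / 2) m))
          * (Complex.Gamma (2 * (m : ℂ) - x) * Complex.Gamma (1 - y)
              / Complex.Gamma (2 * (m : ℂ) + 1 - x - y)))
      = (Complex.Gamma (-x) * Complex.Gamma (1 - y) / Complex.Gamma (1 - x - y))
          * ∑' m : ℕ, poch (-y / 2) m * poch (-x / 2) m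
              / ((m.factorial : ℂ) * poch (1 - (x + y) / 2) m) := by
    rw [tsum_congr key, tsum_mul_left]
  have hgam : -x * (Complex.Gamma (-x) * Complex.Gamma (1-y) / Complex.Gamma (1-x-y))
      = Complex.Gamma (1-x) * Complex.Gamma (1-y) / Complex.Gamma (1-x-y) := by
    rw [show (1:ℂ)-x = -x + 1 by ring, Complex.Gamma_add_one _ hxne]
    ring
  have part1 : -x * ∑' m : ℕ,
        (poch (-y / 2) m * poch ((1 - x - y) / 2) m
            / ((m.factorial : ℂ) * poch ((1 - x) / 2) m))
          * (Complex.Gamma (2 * (m : ℂ) - x) * Complex.Gamma (1 - y)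
              / Complex.Gamma (2 * (m : ℂ) + 1 - x - y))
      = Complex.Gamma (1 - x) * Complex.Gamma (1 - y) / Complex.Gamma (1 - x - y)
          * ∑' m : ℕ, poch (-y / 2) m * poch (-x / 2) m
              / ((m.factorial : ℂ) * poch (1 - (x + y) / 2) m) := by
    rw [hsum1, ← mul_assoc, hgam]
  refine ⟨part1, part1.trans ?_⟩
  congr 1
  have hga : 0 < ((-y/2) + 1).re := by
    simp only [Complex.add_re, Complex.one_re, re_div_two, Complex.neg_re]
    linarith
  have hgb : 0 < ((-x/2) + 1).re := by
    simp only [Complex.add_re, Complex.one_re, re_div_two, Complex.neg_re]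
    linarith
  have hgc : 1/2 ≤ ((-y/2) + (-x/2) + 1).re := by
    simp only [Complex.add_re, Complex.one_re, re_div_two, Complex.neg_re]
    linarith
  have hgauss := gauss_tsum (-y/2) (-x/2) hga hgb hgc
  rw [show -y/2 + -x/2 + 1 = 1-(x+y)/2 by ring, show -y/2+1 = 1-y/2 by ring,
    show -x/2+1 = 1-x/2 by ring, mul_comm (Complex.Gamma (1-y/2))] at hgauss
  exact hgauss

end
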